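/- Fix an integer m ≥ 1 and a real b ≠ 0. Let I ⊆ ℝ be a nonempty open interval with 0 ∉ I, and let φ : I → ℝ be twice differentiable and satisfy τ⁴φ″(τ) + [(2−m)τ³ + bτ²]φ′(τ) − mτ²φ(τ) = 0 at every τ ∈ I. Then there exist real constants β₁, β₂ such that φ(τ) = β₁·τ^m·exp(b/τ) + β₂·Σ_{l=0}^{m} (b^{m−l}/(m−l)!)·τ^l for all τ ∈ I. -/

import Mathlib

/-- Constancy from zero derivative on an open ord-connected set. -/
lemma aux_const_on {I : Set ℝ} (hIopen : IsOpen I) (hIconn : I.OrdConnected)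
    (f : ℝ → ℝ) (hf : ∀ τ ∈ I, HasDerivAt f 0 τ) {x y : ℝ} (hx : x ∈ I) (hy : y ∈ I) :
    f x = f y := by
  have hconv : Convex ℝ I := convex_iff_ordConnected.mpr hIconn
  refine hconv.is_const_of_fderivWithin_eq_zero
    (fun τ hτ => ((hf τ hτ).differentiableAt).differentiableWithinAt) (fun τ hτ => ?_) hx hy
  rw [fderivWithin_of_isOpen hIopen hτ, (hf τ hτ).hasFDerivAt.fderiv]
  ext; simp

/-- Telescoping algebraic identity for the polynomial solution. -/
lemma aux_poly_id (m : ℕ) (b τ : ℝ) :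
    τ^2 * (∑ l ∈ Finset.range (m+1), b^(m-l) / ((m-l).factorial : ℝ) * ((l:ℝ) * τ^(l-1)))
      + (b - (m:ℝ)*τ) * (∑ l ∈ Finset.range (m+1), b^(m-l) / ((m-l).factorial : ℝ) * τ^l)
    = b^(m+1) / (m.factorial : ℝ) := by
  set a : ℕ → ℝ := fun l => ((m+1-l : ℕ) : ℝ) * b^(m+1-l) * τ^l / ((m+1-l).factorial : ℝ)
    with ha
  have key : ∀ l ∈ Finset.range (m+1),
      τ^2 * (b^(m-l) / ((m-l).factorial : ℝ) * ((l:ℝ) * τ^(l-1)))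
        + (b - (m:ℝ)*τ) * (b^(m-l) / ((m-l).factorial : ℝ) * τ^l)
      = a l - a (l+1) := by
    intro l hl
    rw [Finset.mem_range] at hl
    obtain ⟨k, rfl⟩ := Nat.exists_eq_add_of_le (by omega : l ≤ m)
    have h1 : l + k - l = k := by omega
    have h2 : l + k + 1 - l = k + 1 := by omega
    have h3 : l + k + 1 - (l + 1) = k := by omega
    have hfk : ((k.factorial : ℝ)) ≠ 0 := Nat.cast_ne_zero.mpr k.factorial_ne_zero
    have hfk1 : (((k+1).factorial : ℝ)) = (k+1) * k.factorial := by
      rw [Nat.factorial_succ]; push_cast; ring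
    rw [ha]; simp only [h1, h2, h3]
    cases l with
    | zero => simp [hfk1]; field_simp; ring
    | succ n =>
        have h4 : n + 1 - 1 = n := rfl
        rw [h4, hfk1]
        push_cast
        field_simp
        ring
  rw [Finset.mul_sum, Finset.mul_sum, ← Finset.sum_add_distrib,
    Finset.sum_congr rfl key, Finset.sum_range_sub' a]
  have : a (m+1) = 0 := by simp [ha]
  rw [this, ha]
  simp only [Nat.add_sub_cancel_left, Nat.sub_zero, Nat.add_sub_cancel]
  have : (((m+1).factorial : ℝ)) = (m+1) * m.factorial := by
    rw [Nat.factorial_succ]; push_cast; ring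
  rw [this]
  have hfm : ((m.factorial : ℝ)) ≠ 0 := Nat.cast_ne_zero.mpr m.factorial_ne_zero
  field_simp
  push_cast
  ring

/-- Every solution of the homogeneous version of (F1) on a nonempty
open interval avoiding `0` is a linear combination of `τ^m·exp(b/τ)` and
`Σ_{l=0}^{m} (b^{m−l}/(m−l)!)·τ^l`. -/
theorem stmt_16 (m : ℕ) (hm : 1 ≤ m) (b : ℝ) (hb : b ≠ 0)
    (I : Set ℝ) (hIopen : IsOpen I) (hIne : I.Nonempty) (hIconn : I.OrdConnected)
    (h0 : (0:ℝ) ∉ I)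
    (φ : ℝ → ℝ)
    (hφ : ∀ τ ∈ I, DifferentiableAt ℝ φ τ)
    (hφ' : ∀ τ ∈ I, DifferentiableAt ℝ (deriv φ) τ)
    (hode : ∀ τ ∈ I,
      τ^4 * deriv (deriv φ) τ + ((2-(m:ℝ))*τ^3 + b*τ^2) * deriv φ τ
        - (m:ℝ)*τ^2 * φ τ = 0) :
    ∃ β₁ β₂ : ℝ, ∀ τ ∈ I,
      φ τ = β₁ * (τ^m * Real.exp (b/τ))
        + β₂ * ∑ l ∈ Finset.range (m+1), b^(m-l) / ((m-l).factorial : ℝ) * τ^l := by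
  obtain ⟨τ₀, hτ₀⟩ := hIne
  have hτne : ∀ τ ∈ I, τ ≠ 0 := fun τ hτ h => h0 (h ▸ hτ)
  set u₂ : ℝ → ℝ := fun τ => ∑ l ∈ Finset.range (m+1),
    b^(m-l) / ((m-l).factorial : ℝ) * τ^l with hu₂
  set u₂' : ℝ → ℝ := fun τ => ∑ l ∈ Finset.range (m+1),
    b^(m-l) / ((m-l).factorial : ℝ) * ((l:ℝ) * τ^(l-1)) with hu₂'
  have hu₂d : ∀ τ : ℝ, HasDerivAt u₂ (u₂' τ) τ := by
    intro τ
    apply HasDerivAt.fun_sum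
    intro l _
    exact (hasDerivAt_pow l τ).const_mul _
  -- Step 1: g := τ²φ' + (b - mτ)φ has zero derivative on I
  set g : ℝ → ℝ := fun τ => τ^2 * deriv φ τ + (b - (m:ℝ)*τ) * φ τ with hg
  have hgd : ∀ τ ∈ I, HasDerivAt g 0 τ := by
    intro τ hτ
    have h1 : HasDerivAt φ (deriv φ τ) τ := (hφ τ hτ).hasDerivAt
    have h2 : HasDerivAt (deriv φ) (deriv (deriv φ) τ) τ := (hφ' τ hτ).hasDerivAt
    have h3 : HasDerivAt (fun τ : ℝ => τ^2) (2*τ) τ := by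
      simpa using hasDerivAt_pow 2 τ
    have h4 : HasDerivAt (fun τ : ℝ => b - (m:ℝ)*τ) (-(m:ℝ)) τ := by
      simpa using ((hasDerivAt_id τ).const_mul (m:ℝ)).const_sub b
    have h5 := (h3.mul h2).add (h4.mul h1)
    have hτ0 := hτne τ hτ
    have hE : 2*τ * deriv φ τ + τ^2 * deriv (deriv φ) τ
        + (-(m:ℝ) * φ τ + (b - (m:ℝ)*τ) * deriv φ τ) = 0 := by
      have h6 := hode τ hτ
      have h7 : τ^2 * (2*τ * deriv φ τ + τ^2 * deriv (deriv φ) τ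
          + (-(m:ℝ) * φ τ + (b - (m:ℝ)*τ) * deriv φ τ)) = 0 := by
        linear_combination h6
      rcases mul_eq_zero.mp h7 with h | h
      · exact absurd h (pow_ne_zero 2 hτ0)
      · exact h
    rw [← hE]
    exact h5
  set c : ℝ := g τ₀ with hc
  have hgc : ∀ τ ∈ I, g τ = c := fun τ hτ =>
    aux_const_on hIopen hIconn g hgd hτ hτ₀
  -- Step 2: the particular polynomial solution
  set β₂ : ℝ := c * (m.factorial : ℝ) / b^(m+1) with hβ₂
  have hfm : ((m.factorial : ℝ)) ≠ 0 := Nat.cast_ne_zero.mpr m.factorial_ne_zero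
  have hu₂eq : ∀ τ : ℝ, τ^2 * u₂' τ + (b - (m:ℝ)*τ) * u₂ τ = b^(m+1) / (m.factorial : ℝ) :=
    fun τ => aux_poly_id m b τ
  -- Step 3: ψ := φ - β₂·u₂ satisfies the homogeneous first-order equation
  set ψ : ℝ → ℝ := fun τ => φ τ - β₂ * u₂ τ with hψ
  have hψd : ∀ τ ∈ I, HasDerivAt ψ (deriv φ τ - β₂ * u₂' τ) τ :=
    fun τ hτ => (hφ τ hτ).hasDerivAt.sub ((hu₂d τ).const_mul β₂)
  have hψeq : ∀ τ ∈ I, τ^2 * (deriv φ τ - β₂ * u₂' τ) + (b - (m:ℝ)*τ) * ψ τ = 0 := by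
    intro τ hτ
    have h1 : τ^2 * deriv φ τ + (b - (m:ℝ)*τ) * φ τ = c := hgc τ hτ
    have h2 := hu₂eq τ
    have hbm : b^(m+1) ≠ 0 := pow_ne_zero _ hb
    have hβ : β₂ * (b^(m+1) / (m.factorial : ℝ)) = c := by
      rw [hβ₂]; field_simp
    show τ^2 * (deriv φ τ - β₂ * u₂' τ) + (b - (m:ℝ)*τ) * (φ τ - β₂ * u₂ τ) = 0
    linear_combination h1 - β₂ * h2 - hβ
  -- Step 4: h := ψ·exp(-b/τ)/τ^m has zero derivative on I
  set h : ℝ → ℝ := fun τ => ψ τ * Real.exp (-(b/τ)) * (τ^m)⁻¹ with hh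
  have hhd : ∀ τ ∈ I, HasDerivAt h 0 τ := by
    intro τ hτ
    have hτ0 := hτne τ hτ
    have hpm : τ^m ≠ 0 := pow_ne_zero _ hτ0
    have e1 : HasDerivAt (fun τ : ℝ => -(b/τ)) (b/τ^2) τ := by
      simpa [div_eq_mul_inv] using ((hasDerivAt_inv hτ0).const_mul b).fun_neg
    have e2 : HasDerivAt (fun τ : ℝ => Real.exp (-(b/τ)))
        (Real.exp (-(b/τ)) * (b/τ^2)) τ := e1.exp
    have e3 : HasDerivAt (fun τ : ℝ => (τ^m)⁻¹)
        (-((m:ℝ) * τ^(m-1)) / (τ^m)^2) τ := (hasDerivAt_pow m τ).inv hpm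
    have e4 := ((hψd τ hτ).mul e2).mul e3
    have hm1 : τ^(m-1) * τ = τ^m := by
      rw [← pow_succ]
      congr 1
      omega
    have hval : ((deriv φ τ - β₂ * u₂' τ) * Real.exp (-(b/τ))
          + ψ τ * (Real.exp (-(b/τ)) * (b/τ^2))) * (τ^m)⁻¹
        + ψ τ * Real.exp (-(b/τ)) * (-((m:ℝ) * τ^(m-1)) / (τ^m)^2) = 0 := by
      have hfo := hψeq τ hτ
      have hψ' : deriv φ τ - β₂ * u₂' τ = -((b - (m:ℝ)*τ) * ψ τ) / τ^2 := by
        field_simp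
        linear_combination hfo
      rw [hψ']
      field_simp
      linear_combination (-((m:ℝ) * ψ τ * Real.exp (-(b/τ)) * τ)) * hm1
    rw [← hval]
    exact e4
  -- Step 5: conclude
  set β₁ : ℝ := h τ₀ with hβ₁
  refine ⟨β₁, β₂, fun τ hτ => ?_⟩
  have hτ0 := hτne τ hτ
  have hpm : τ^m ≠ 0 := pow_ne_zero _ hτ0
  have hhc : h τ = β₁ := aux_const_on hIopen hIconn h hhd hτ hτ₀
  have hψτ : ψ τ = β₁ * (τ^m * Real.exp (b/τ)) := by
    have hexp : Real.exp (-(b/τ)) = (Real.exp (b/τ))⁻¹ := by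
      rw [← Real.exp_neg]
    rw [hh] at hhc
    simp only [hexp] at hhc
    have hexp0 : Real.exp (b/τ) ≠ 0 := Real.exp_ne_zero _
    field_simp at hhc
    rw [hhc]; ring
  have : φ τ = ψ τ + β₂ * u₂ τ := by rw [hψ]; ring
  rw [this, hψτ]
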